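/- Every nontrivial free rank-one conformal module over the Schrödinger-Virasoro conformal algebra on which the module structure is given by L_λ v = (∂+α+Δλ)v, M_λ v = Y_λ v = 0 is irreducible if and only if Δ ≠ 0. -/
import Mathlib


open Polynomial

/- The rank-one conformal module M_{Δ,α} = ℂ[∂]v over the Schrödinger-Virasoro
conformal algebra, identified with ℂ[X] (X = ∂); with λ the outer variable of
ℂ[∂][λ], the λ-actions are L_λ(f(∂)v) = (∂ + α + Δλ) f(∂+λ) v and
M_λ(f(∂)v) = Y_λ(f(∂)v) = 0. -/

/-- Substitution f(∂) ↦ f(∂+λ) in ℂ[∂][λ]. -/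
noncomputable def shP (f : Polynomial ℂ) : Polynomial (Polynomial ℂ) :=
  Polynomial.aeval (Polynomial.C Polynomial.X + Polynomial.X) f

/-- λ-action of L on M_{Δ,α}: L_λ(f(∂)v) = (∂ + α + Δλ) f(∂+λ) v. -/
noncomputable def LA (Δ α : ℂ) (f : Polynomial ℂ) : Polynomial (Polynomial ℂ) :=
  (Polynomial.C (Polynomial.X + Polynomial.C α)
    + Polynomial.C (Polynomial.C Δ) * Polynomial.X) * shP f

/-- λ-actions of M and Y on M_{Δ,α} are zero. -/
noncomputable def MA (f : Polynomial ℂ) : Polynomial (Polynomial ℂ) := 0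
noncomputable def YA (f : Polynomial ℂ) : Polynomial (Polynomial ℂ) := 0

lemma shP_eq_sum (f : Polynomial ℂ) :
    shP f = ∑ i ∈ Finset.range (f.natDegree + 1),
      f.coeff i • (Polynomial.C Polynomial.X + Polynomial.X : Polynomial (Polynomial ℂ)) ^ i :=
  Polynomial.aeval_eq_sum_range _

lemma g_monic : (Polynomial.C Polynomial.X + Polynomial.X : Polynomial (Polynomial ℂ)).Monic := by
  rw [add_comm]; exact Polynomial.monic_X_add_C _

lemma g_natDegree : (Polynomial.C Polynomial.X + Polynomial.X : Polynomial (Polynomial ℂ)).natDegree = 1 := by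
  rw [add_comm (Polynomial.C Polynomial.X) Polynomial.X]; exact Polynomial.natDegree_X_add_C _

lemma gpow_natDegree (i : ℕ) :
    ((Polynomial.C Polynomial.X + Polynomial.X : Polynomial (Polynomial ℂ)) ^ i).natDegree = i := by
  rw [g_monic.natDegree_pow, g_natDegree, mul_one]

lemma shP_coeff_gt (f : Polynomial ℂ) (m : ℕ) (hm : f.natDegree < m) :
    (shP f).coeff m = 0 := by
  rw [shP_eq_sum, Polynomial.finset_sum_coeff]
  apply Finset.sum_eq_zero
  intro i hi
  have hz : ((Polynomial.C Polynomial.X + Polynomial.X : Polynomial (Polynomial ℂ)) ^ i).coeff m = 0 := by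
    apply Polynomial.coeff_eq_zero_of_natDegree_lt
    rw [gpow_natDegree]
    have := Finset.mem_range.mp hi; omega
  rw [Polynomial.coeff_smul, hz, smul_zero]

lemma shP_coeff_nd (f : Polynomial ℂ) :
    (shP f).coeff f.natDegree = Polynomial.C f.leadingCoeff := by
  rw [shP_eq_sum, Polynomial.finset_sum_coeff]
  rw [Finset.sum_eq_single f.natDegree]
  · have h1 : ((Polynomial.C Polynomial.X + Polynomial.X : Polynomial (Polynomial ℂ)) ^ f.natDegree).coeff f.natDegree = 1 := by
      have := (g_monic.pow f.natDegree).coeff_natDegree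
      rwa [gpow_natDegree] at this
    rw [Polynomial.coeff_smul, h1, Polynomial.leadingCoeff, smul_eq_C_mul, mul_one]
  · intro i hi hne
    have hilt : i < f.natDegree := by
      have := Finset.mem_range.mp hi; omega
    have hz : ((Polynomial.C Polynomial.X + Polynomial.X : Polynomial (Polynomial ℂ)) ^ i).coeff f.natDegree = 0 := by
      apply Polynomial.coeff_eq_zero_of_natDegree_lt
      rw [gpow_natDegree]; exact hilt
    rw [Polynomial.coeff_smul, hz, smul_zero]
  · intro h; exact absurd (Finset.self_mem_range_succ f.natDegree) h

lemma LA_coeff_top (Δ α : ℂ) (f : Polynomial ℂ) :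
    (LA Δ α f).coeff (f.natDegree + 1) = Polynomial.C (Δ * f.leadingCoeff) := by
  unfold LA
  rw [add_mul, Polynomial.coeff_add, Polynomial.coeff_C_mul,
    shP_coeff_gt f _ (Nat.lt_succ_self _), mul_zero, zero_add,
    mul_assoc, Polynomial.coeff_C_mul, Polynomial.coeff_X_mul, shP_coeff_nd,
    ← Polynomial.C_mul]

lemma LA_zero (α : ℂ) (f : Polynomial ℂ) (j : ℕ) :
    (LA 0 α f).coeff j = (Polynomial.X + Polynomial.C α) * (shP f).coeff j := by
  unfold LA
  simp only [Polynomial.C_0, zero_mul, add_zero, Polynomial.coeff_C_mul]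

/- The module M_{Δ,α} over the Schrödinger-Virasoro conformal algebra (with
L_λ v = (∂+α+Δλ)v and M_λ v = Y_λ v = 0) is irreducible — i.e. its only
ℂ[∂]-submodules closed under all coefficients of the λ-actions of L, M, Y
are 0 and itself — if and only if Δ ≠ 0. -/
theorem SV_M_Delta_alpha_irreducible_iff (Δ α : ℂ) :
    (∀ W : Submodule (Polynomial ℂ) (Polynomial ℂ),
      (∀ f ∈ W, ∀ j : ℕ,
        (LA Δ α f).coeff j ∈ W ∧ (MA f).coeff j ∈ W ∧ (YA f).coeff j ∈ W) →
      W = ⊥ ∨ W = ⊤) ↔ Δ ≠ 0 := by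
  constructor
  · intro h hΔ0
    subst hΔ0
    set W : Ideal (Polynomial ℂ) := Ideal.span {Polynomial.X + Polynomial.C α} with hWdef
    have hmem : Polynomial.X + Polynomial.C α ∈ W := Ideal.subset_span rfl
    have hinv : ∀ f ∈ W, ∀ j : ℕ,
        (LA 0 α f).coeff j ∈ W ∧ (MA f).coeff j ∈ W ∧ (YA f).coeff j ∈ W := by
      intro f _ j
      refine ⟨?_, by simp [MA], by simp [YA]⟩
      rw [LA_zero]
      exact Ideal.mul_mem_right _ _ hmem
    rcases h W hinv with hb | ht
    · have : Polynomial.X + Polynomial.C α = 0 := by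
        rw [hb] at hmem; simpa using hmem
      exact Polynomial.X_add_C_ne_zero α this
    · have hu : IsUnit (Polynomial.X + Polynomial.C α) :=
        (Ideal.span_singleton_eq_top).mp ht
      have := Polynomial.natDegree_eq_zero_of_isUnit hu
      rw [Polynomial.natDegree_X_add_C] at this
      exact one_ne_zero this
  · intro hΔ W hW
    by_cases hbot : W = ⊥
    · exact Or.inl hbot
    · right
      obtain ⟨f, hfW, hf0⟩ := Submodule.exists_mem_ne_zero_of_ne_bot hbot
      have hc : Polynomial.C (Δ * f.leadingCoeff) ∈ W := by
        have := (hW f hfW (f.natDegree + 1)).1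
        rwa [LA_coeff_top] at this
      have hcne : (Δ * f.leadingCoeff) ≠ 0 :=
        mul_ne_zero hΔ (Polynomial.leadingCoeff_ne_zero.mpr hf0)
      have h1 : (1 : Polynomial ℂ) ∈ W := by
        have := W.smul_mem (Polynomial.C (Δ * f.leadingCoeff)⁻¹) hc
        rwa [smul_eq_mul, ← Polynomial.C_mul, inv_mul_cancel₀ hcne, Polynomial.C_1] at this
      rw [Submodule.eq_top_iff']
      intro x
      simpa using W.smul_mem x h1
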